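/- Let H be a subspace of G × G. Then there exist nonnegative integers k and r such that dim(H ∩ H^ω) = n − k − r, dim H = n − k + r, and dim(H + H^ω) = n + k + r; equivalently, the codimension of H in H + H^ω equals 2k, the codimension of H ∩ H^ω in H equals 2r, and dim(H ∩ H^ω) = n − k − r. -/

import Mathlib

open Finset

/-- Orthogonal complement of a submodule with respect to a bilinear form:
`ortho ξ H = {v | ξ(v,h) = 0 for all h ∈ H}`. -/
def ortho {K V : Type*} [CommSemiring K] [AddCommMonoid V] [Module K V]
    (ξ : V →ₗ[K] V →ₗ[K] K) (H : Submodule K V) : Submodule K V :=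
  ⨅ h ∈ H, LinearMap.ker (ξ.flip h)

/-- The dot product `θ(a,b) = ∑ j, a j * b j` as a bilinear form on `Fin n → ZMod p`. -/
def dotB (p n : ℕ) : (Fin n → ZMod p) →ₗ[ZMod p] (Fin n → ZMod p) →ₗ[ZMod p] ZMod p :=
  LinearMap.mk₂ (ZMod p) (fun a b => ∑ j, a j * b j)
    (fun a a' b => by simp [add_mul, Finset.sum_add_distrib])
    (fun c a b => by simp [Finset.mul_sum, mul_assoc])
    (fun a b b' => by simp [mul_add, Finset.sum_add_distrib])
    (fun c a b => by simp [Finset.mul_sum, mul_left_comm])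

/-- The symmetric form on `V × V` induced by a bilinear form `B` on `V`:
`(v,w) ↦ B v.1 w.1 + B v.2 w.2`. -/
def sumB {K V : Type*} [CommRing K] [AddCommGroup V] [Module K V]
    (B : V →ₗ[K] V →ₗ[K] K) : (V × V) →ₗ[K] (V × V) →ₗ[K] K :=
  LinearMap.mk₂ K (fun v w => B v.1 w.1 + B v.2 w.2)
    (fun v v' w => by simp; ring)
    (fun c v w => by simp; ring)
    (fun v w w' => by simp; ring)
    (fun c v w => by simp; ring)

/-- The symplectic form on `V × V` induced by a symmetric bilinear form `B` on `V`:
`(v,w) ↦ B v.2 w.1 - B v.1 w.2`. -/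
def sympB {K V : Type*} [CommRing K] [AddCommGroup V] [Module K V]
    (B : V →ₗ[K] V →ₗ[K] K) : (V × V) →ₗ[K] (V × V) →ₗ[K] K :=
  LinearMap.mk₂ K (fun v w => B v.2 w.1 - B v.1 w.2)
    (fun v v' w => by simp; ring)
    (fun c v w => by simp; ring)
    (fun v w w' => by simp; ring)
    (fun c v w => by simp; ring)

section AuxEven

open Module

variable {K : Type*} [Field K]

/-- A nondegenerate alternating bilinear form on a finite-dimensional space has even rank. -/
private lemma even_finrank_of_alt_nondeg :
    ∀ (m : ℕ) {V : Type} [AddCommGroup V] [Module K V] [FiniteDimensional K V]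
    (B : LinearMap.BilinForm K V), finrank K V ≤ m → B.IsAlt → B.Nondegenerate →
    Even (finrank K V) := by
  intro m
  induction m with
  | zero => intro V _ _ _ B hle _ _; simp [Nat.le_zero.mp hle]
  | succ m ih =>
    intro V _ _ _ B hle hAlt hB
    by_cases h0 : finrank K V = 0
    · simp [h0]
    have hrefl : B.IsRefl := hAlt.isRefl
    obtain ⟨v, hv⟩ : ∃ v : V, v ≠ 0 := by
      have : Nontrivial V := Module.nontrivial_of_finrank_pos (R := K) (Nat.pos_of_ne_zero h0)
      exact exists_ne 0
    obtain ⟨w, hw⟩ : ∃ w, B v w ≠ 0 := by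
      by_contra hc
      push_neg at hc
      exact hv (hB.1 v hc)
    have hli : LinearIndependent K ![v, w] := by
      rw [LinearIndependent.pair_iff]
      intro s t hst
      have h1 : B v (s • v + t • w) = 0 := by rw [hst]; simp
      simp only [map_add, map_smul, smul_eq_mul, hAlt v, mul_zero, zero_add] at h1
      have ht : t = 0 := (mul_eq_zero.mp h1).resolve_right hw
      subst ht
      rw [zero_smul, add_zero, smul_eq_zero] at hst
      exact ⟨hst.resolve_right hv, rfl⟩
    set U : Submodule K V := Submodule.span K {v, w} with hU
    have hvU : v ∈ U := Submodule.subset_span (by simp)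
    have hwU : w ∈ U := Submodule.subset_span (by simp)
    have hUrank : finrank K U = 2 := by
      have hs : Set.range ![v, w] = ({v, w} : Set V) := by
        ext z
        simp [Matrix.range_cons, Matrix.range_empty, or_comm]
      rw [hU, ← hs, finrank_span_eq_card hli]
      simp
    have hUnd : (B.restrict U).Nondegenerate := by
      refine LinearMap.BilinForm.Nondegenerate.ofSeparatingLeft ?_
      rintro ⟨x, hx⟩ hxz
      obtain ⟨a, b, hab⟩ := Submodule.mem_span_pair.mp hx
      have h1 : B x w = 0 := hxz ⟨w, hwU⟩
      have h2 : B x v = 0 := hxz ⟨v, hvU⟩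
      rw [← hab] at h1 h2
      have hwv : B w v = - (B v w) := (LinearMap.IsAlt.neg hAlt v w).symm
      simp only [map_add, map_smul, LinearMap.add_apply, LinearMap.smul_apply,
        smul_eq_mul, hAlt.self_eq_zero, hwv, mul_zero, add_zero, zero_add,
        mul_neg] at h1 h2
      have ha : a = 0 := (mul_eq_zero.mp h1).resolve_right hw
      have hb : b = 0 := (mul_eq_zero.mp (neg_eq_zero.mp h2)).resolve_right hw
      simp only [ha, hb, zero_smul, add_zero] at hab
      simp [← hab]
    have hCompl : IsCompl U (B.orthogonal U) :=
      LinearMap.BilinForm.isCompl_orthogonal_of_restrict_nondegenerate hrefl hUnd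
    set W : Submodule K V := B.orthogonal U with hWdef
    have hWnd : (B.restrict W).Nondegenerate := by
      apply B.nondegenerate_restrict_of_disjoint_orthogonal hrefl
      rw [hWdef, LinearMap.BilinForm.orthogonal_orthogonal hB hrefl]
      exact hCompl.disjoint.symm
    have hWalt : (B.restrict W).IsAlt := fun x => hAlt x
    have hdim : finrank K U + finrank K W = finrank K V :=
      Submodule.finrank_add_eq_of_isCompl hCompl
    have hWle : finrank K W ≤ m := by omega
    have hWeven := ih (B.restrict W) hWle hWalt hWnd
    have heven : Even (finrank K U + finrank K W) := by
      rw [hUrank]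
      obtain ⟨c, hc⟩ := hWeven
      exact ⟨c + 1, by omega⟩
    rwa [hdim] at heven

/-- The rank of an alternating bilinear form (codimension of its radical) is even. -/
private lemma exists_finrank_eq_radical_add_two_mul
    {V : Type} [AddCommGroup V] [Module K V] [FiniteDimensional K V]
    (B : LinearMap.BilinForm K V) (hAlt : B.IsAlt) :
    ∃ r : ℕ, finrank K V = finrank K (B.orthogonal ⊤) + 2 * r := by
  set R : Submodule K V := B.orthogonal ⊤ with hR
  have hmemR : ∀ x : V, x ∈ R ↔ ∀ u : V, B u x = 0 := by
    intro x
    constructor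
    · intro hx u; exact hx u trivial
    · intro hx u _; exact hx u
  obtain ⟨W, hW⟩ := Submodule.exists_isCompl R
  have hWnd : (B.restrict W).Nondegenerate := by
    refine LinearMap.BilinForm.Nondegenerate.ofSeparatingLeft ?_
    rintro ⟨x, hx⟩ hxz
    have hall : ∀ z : V, B x z = 0 := by
      intro z
      have hz : z ∈ R ⊔ W := by rw [hW.sup_eq_top]; trivial
      rcases Submodule.mem_sup.mp hz with ⟨a, ha, b, hb, rfl⟩
      have h1 : B x a = 0 := (hmemR a).mp ha x
      have h2 : B x b = 0 := hxz ⟨b, hb⟩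
      rw [map_add, h1, h2, add_zero]
    have hx1 : x ∈ R := (hmemR x).mpr fun u => hAlt.isRefl x u (hall u)
    have hx2 : x ∈ R ⊓ W := ⟨hx1, hx⟩
    rw [hW.inf_eq_bot] at hx2
    simpa using hx2
  have hWalt : (B.restrict W).IsAlt := fun x => hAlt x
  obtain ⟨r, hr⟩ := even_finrank_of_alt_nondeg (finrank K W) (B.restrict W) le_rfl hWalt hWnd
  refine ⟨r, ?_⟩
  have hdim : finrank K R + finrank K W = finrank K V :=
    Submodule.finrank_add_eq_of_isCompl hW
  omega

end AuxEven

section AuxForms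

variable (p n : ℕ)

private lemma dotB_symm (a b : Fin n → ZMod p) : dotB p n a b = dotB p n b a := by
  simp only [dotB, LinearMap.mk₂_apply]
  exact Finset.sum_congr rfl fun j _ => mul_comm _ _

private lemma dotB_nondeg [NeZero p] :
    LinearMap.BilinForm.Nondegenerate (dotB p n) := by
  refine (LinearMap.IsRefl.nondegenerate_iff_separatingLeft (fun a b h => by rw [dotB_symm]; exact h)).mpr ?_
  intro a ha
  funext j
  have hj := ha (Pi.single j 1)
  simp only [dotB, LinearMap.mk₂_apply] at hj
  rw [Finset.sum_eq_single j (fun i _ hi => by simp [Pi.single_eq_of_ne hi])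
    (by simp)] at hj
  simpa using hj

private lemma sympB_alt : LinearMap.IsAlt (sympB (dotB p n)) := by
  intro v
  simp [sympB, dotB_symm]

private lemma sympB_nondeg [NeZero p] :
    LinearMap.BilinForm.Nondegenerate (sympB (dotB p n)) := by
  refine (sympB_alt p n).isRefl.nondegenerate_iff_separatingLeft.mpr ?_
  rintro ⟨a, b⟩ hab
  have ha : a = 0 := by
    refine (dotB_nondeg p n).1 a fun d => ?_
    have h := hab (0, d)
    simp only [sympB, LinearMap.mk₂_apply, map_zero, LinearMap.zero_apply, zero_sub,
      neg_eq_zero] at h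
    exact h
  have hb : b = 0 := by
    refine (dotB_nondeg p n).1 b fun c => ?_
    have h := hab (c, 0)
    simpa [sympB] using h
  simp [ha, hb]

private lemma ortho_eq_orthogonal
    (H : Submodule (ZMod p) ((Fin n → ZMod p) × (Fin n → ZMod p))) :
    ortho (sympB (dotB p n)) H
      = LinearMap.BilinForm.orthogonal (sympB (dotB p n)) H := by
  ext x
  simp only [ortho, Submodule.mem_iInf, LinearMap.mem_ker, LinearMap.flip_apply,
    LinearMap.BilinForm.mem_orthogonal_iff, LinearMap.BilinForm.IsOrtho]
  constructor
  · intro h u hu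
    exact (sympB_alt p n).isRefl x u (h u hu)
  · intro h u hu
    exact (sympB_alt p n).isRefl u x (h u hu)

end AuxForms

/-- the tower of a subsystem stabilizer code `H ≤ G × G` has dimensions
`dim(H ⊓ H^ω) = n - k - r`, `dim H = n - k + r`, `dim(H ⊔ H^ω) = n + k + r`;
equivalently the codimension of `H` in `H ⊔ H^ω` is `2k` and the codimension of
`H ⊓ H^ω` in `H` is `2r`. -/
theorem stmt0 (p n : ℕ) [Fact p.Prime]
    (H : Submodule (ZMod p) ((Fin n → ZMod p) × (Fin n → ZMod p))) :
    ∃ k r : ℕ,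
      Module.finrank (ZMod p) ↥(H ⊓ ortho (sympB (dotB p n)) H) + k + r = n ∧
      Module.finrank (ZMod p) ↥H + k = n + r ∧
      Module.finrank (ZMod p) ↥(H ⊔ ortho (sympB (dotB p n)) H) = n + k + r ∧
      Module.finrank (ZMod p) ↥(H ⊔ ortho (sympB (dotB p n)) H)
        = Module.finrank (ZMod p) ↥H + 2 * k ∧
      Module.finrank (ZMod p) ↥H
        = Module.finrank (ZMod p) ↥(H ⊓ ortho (sympB (dotB p n)) H) + 2 * r := by
  classical
  have : NeZero p := ⟨(Fact.out : p.Prime).ne_zero⟩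
  rw [ortho_eq_orthogonal]
  set B : LinearMap.BilinForm (ZMod p) ((Fin n → ZMod p) × (Fin n → ZMod p)) :=
    sympB (dotB p n) with hBdef
  have hAlt : B.IsAlt := sympB_alt p n
  have hrefl : B.IsRefl := hAlt.isRefl
  have hB : LinearMap.BilinForm.Nondegenerate B := sympB_nondeg p n
  set O := B.orthogonal H with hO
  have hVdim : Module.finrank (ZMod p) ((Fin n → ZMod p) × (Fin n → ZMod p)) = 2 * n := by
    rw [Module.finrank_prod]
    simp [Module.finrank_pi]
    ring
  have h1 : Module.finrank (ZMod p) H + Module.finrank (ZMod p) O = 2 * n := by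
    have h := LinearMap.BilinForm.finrank_add_finrank_orthogonal hrefl (B := B) H
    rwa [LinearMap.BilinForm.orthogonal_top_eq_bot hB, inf_bot_eq, finrank_bot, add_zero,
      hVdim] at h
  have h2 : Module.finrank (ZMod p) ↥(H ⊔ O) + Module.finrank (ZMod p) ↥(H ⊓ O)
      = Module.finrank (ZMod p) H + Module.finrank (ZMod p) O :=
    Submodule.finrank_sup_add_finrank_inf_eq H O
  have h3 : Module.finrank (ZMod p) H ≤ Module.finrank (ZMod p) ↥(H ⊔ O) :=
    Submodule.finrank_mono le_sup_left
  have hAltR : (B.restrict H).IsAlt := fun x => hAlt x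
  obtain ⟨r, hr⟩ := exists_finrank_eq_radical_add_two_mul (B.restrict H) hAltR
  have hmap : ((B.restrict H).orthogonal ⊤).map H.subtype = H ⊓ O := by
    ext x
    simp only [Submodule.mem_map, LinearMap.BilinForm.mem_orthogonal_iff,
      Submodule.mem_inf, LinearMap.BilinForm.IsOrtho, Submodule.mem_top,
      LinearMap.restrict_apply, Submodule.coe_subtype, hO,
      LinearMap.BilinForm.mem_orthogonal_iff]
    constructor
    · rintro ⟨⟨y, hy⟩, hmem, rfl⟩
      exact ⟨hy, fun u hu => hmem ⟨u, hu⟩ trivial⟩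
    · rintro ⟨hxH, hxO⟩
      exact ⟨⟨x, hxH⟩, fun u _ => hxO u u.2, rfl⟩
  have hrad : Module.finrank (ZMod p) ((B.restrict H).orthogonal ⊤)
      = Module.finrank (ZMod p) ↥(H ⊓ O) := by
    rw [← hmap]
    exact (Submodule.finrank_map_subtype_eq H _).symm
  rw [hrad] at hr
  refine ⟨n - Module.finrank (ZMod p) ↥(H ⊓ O) - r, r, ?_, ?_, ?_, ?_, ?_⟩ <;> omega
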